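/- Counter-example to sufficiency of conditional invariance: define φ : [0,5] → R by φ(x) = x for 0 ≤ x ≤ 2, φ(x) = x − 2 for 3 ≤ x ≤ 4, and φ(x) = 5 − x for 4 < x ≤ 5, and h(z) = −sign(z − 1). Let S have class y = +1 uniform on [0,1] and y = −1 uniform on [1,2] (so h∘φ achieves zero 0-1 error on S). Then for the shifted test distribution T where the class-conditionals are translated by ε ∈ (0, 1/2) within the pieces (with d_TV(T(x|y), S(x|y)) = ε), the expected 0-1 loss of h∘φ on T equals ε. -/

import Mathlib

open MeasureTheory

/-- Total variation distance between two measures. -/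
noncomputable def tvDist {Z : Type*} [MeasurableSpace Z]
    (P Q : Measure Z) : ℝ :=
  ⨆ A : {A : Set Z // MeasurableSet A}, |(P A.1).toReal - (Q A.1).toReal|

/-- The piecewise embedding of the counter-example. -/
noncomputable def φce (x : ℝ) : ℝ :=
  if x ≤ 2 then x else if x ≤ 4 then x - 2 else 5 - x

/-- The classifier `h(z) = -sign(z - 1)` (with `sign t = 1` iff `t > 0`). -/
noncomputable def hce (z : ℝ) : ℝ := if z - 1 > 0 then -1 else 1

/-- The 0-1 loss. -/
noncomputable def loss01 (yhat y : ℝ) : ℝ := if yhat = y then 0 else 1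

lemma hce_of_le {z : ℝ} (h : z ≤ 1) : hce z = 1 := by
  simp only [hce, if_neg (show ¬ z - 1 > 0 by linarith)]

lemma hce_of_gt {z : ℝ} (h : 1 < z) : hce z = -1 := by
  simp only [hce, if_pos (show z - 1 > 0 by linarith)]

lemma tv_helper (a ε : ℝ) (hε0 : 0 < ε) (hε1 : ε ≤ 1) :
    tvDist (volume.restrict (Set.Icc (a+ε) (a+1+ε))) (volume.restrict (Set.Icc a (a+1))) = ε := by
  have hbdd : ∀ A : {A : Set ℝ // MeasurableSet A},
      |((volume.restrict (Set.Icc (a+ε) (a+1+ε))) A.1).toReal -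
        ((volume.restrict (Set.Icc a (a+1))) A.1).toReal| ≤ ε := by
    rintro ⟨s, hs⟩
    simp only [Measure.restrict_apply hs]
    set P := volume (s ∩ Set.Icc (a+ε) (a+1+ε)) with hP
    set Q := volume (s ∩ Set.Icc a (a+1)) with hQ
    have hPt : P ≠ ⊤ := by
      refine ne_top_of_le_ne_top ?_ (measure_mono Set.inter_subset_right)
      simp [Real.volume_Icc]
    have hQt : Q ≠ ⊤ := by
      refine ne_top_of_le_ne_top ?_ (measure_mono Set.inter_subset_right)
      simp [Real.volume_Icc]
    have h1 : P ≤ Q + ENNReal.ofReal ε := by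
      have hsub : s ∩ Set.Icc (a+ε) (a+1+ε) ⊆
          (s ∩ Set.Icc a (a+1)) ∪ Set.Ioc (a+1) (a+1+ε) := by
        rintro t ⟨hts, ht1, ht2⟩
        by_cases h : t ≤ a+1
        · exact Or.inl ⟨hts, by constructor <;> linarith⟩
        · exact Or.inr ⟨by linarith, ht2⟩
      calc P ≤ volume ((s ∩ Set.Icc a (a+1)) ∪ Set.Ioc (a+1) (a+1+ε)) := measure_mono hsub
        _ ≤ Q + volume (Set.Ioc (a+1) (a+1+ε)) := measure_union_le _ _
        _ = Q + ENNReal.ofReal ε := by rw [Real.volume_Ioc]; norm_num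
    have h2 : Q ≤ P + ENNReal.ofReal ε := by
      have hsub : s ∩ Set.Icc a (a+1) ⊆
          (s ∩ Set.Icc (a+ε) (a+1+ε)) ∪ Set.Ico a (a+ε) := by
        rintro t ⟨hts, ht1, ht2⟩
        by_cases h : a + ε ≤ t
        · exact Or.inl ⟨hts, h, by linarith⟩
        · exact Or.inr ⟨ht1, by linarith⟩
      calc Q ≤ volume ((s ∩ Set.Icc (a+ε) (a+1+ε)) ∪ Set.Ico a (a+ε)) := measure_mono hsub
        _ ≤ P + volume (Set.Ico a (a+ε)) := measure_union_le _ _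
        _ = P + ENNReal.ofReal ε := by rw [Real.volume_Ico]; norm_num
    rw [abs_sub_le_iff]
    constructor
    · have h1' := ENNReal.toReal_mono (by finiteness) h1
      rw [ENNReal.toReal_add hQt (by simp), ENNReal.toReal_ofReal hε0.le] at h1'
      linarith
    · have h2' := ENNReal.toReal_mono (by finiteness) h2
      rw [ENNReal.toReal_add hPt (by simp), ENNReal.toReal_ofReal hε0.le] at h2'
      linarith
  apply le_antisymm
  · exact ciSup_le hbdd
  · have hle := le_ciSup ⟨ε, Set.forall_mem_range.mpr hbdd⟩
      (⟨Set.Ioc (a+1) (a+1+ε), measurableSet_Ioc⟩ : {A : Set ℝ // MeasurableSet A})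
    refine le_trans (le_of_eq ?_) hle
    simp only [Measure.restrict_apply measurableSet_Ioc]
    have e1 : Set.Ioc (a+1) (a+1+ε) ∩ Set.Icc (a+ε) (a+1+ε) = Set.Ioc (a+1) (a+1+ε) := by
      refine Set.inter_eq_left.mpr ?_
      rintro t ⟨h1, h2⟩; exact ⟨by linarith, h2⟩
    have e2 : Set.Ioc (a+1) (a+1+ε) ∩ Set.Icc a (a+1) = ∅ := by
      ext t
      simp only [Set.mem_inter_iff, Set.mem_Ioc, Set.mem_Icc, Set.mem_empty_iff_false,
        iff_false, not_and, and_imp]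
      intro h1 h2 h3; linarith
    rw [e1, e2]
    simp only [measure_empty, ENNReal.toReal_zero, sub_zero, Real.volume_Ioc]
    rw [show a+1+ε - (a+1) = ε by ring, ENNReal.toReal_ofReal hε0.le, abs_of_pos hε0]

/-- Counter-example: conditional invariance with zero source error is not
sufficient; an `ε`-shift of the class-conditionals yields test error `ε`. -/
theorem stmt16 (ε : ℝ) (hε0 : 0 < ε) (hε1 : ε < 1 / 2) :
    -- zero 0-1 error on the training environment
    (∫ x in Set.Icc (0:ℝ) 1, loss01 (hce (φce x)) 1) = 0 ∧
    (∫ x in Set.Icc (3:ℝ) 4, loss01 (hce (φce x)) (-1)) = 0 ∧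
    -- the shifted test class-conditionals are at TV distance ε from training
    tvDist (volume.restrict (Set.Icc ε (1 + ε))) (volume.restrict (Set.Icc (0:ℝ) 1)) = ε ∧
    tvDist (volume.restrict (Set.Icc (3 + ε) (4 + ε))) (volume.restrict (Set.Icc (3:ℝ) 4)) = ε ∧
    -- the expected 0-1 loss on each shifted test class-conditional equals ε
    (∫ x in Set.Icc ε (1 + ε), loss01 (hce (φce x)) 1) = ε ∧
    (∫ x in Set.Icc (3 + ε) (4 + ε), loss01 (hce (φce x)) (-1)) = ε := by
  have hε1' : ε ≤ 1 := by linarith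
  refine ⟨?_, ?_, ?_, ?_, ?_, ?_⟩
  · rw [setIntegral_congr_fun measurableSet_Icc (g := fun _ => (0:ℝ))]
    · simp
    · rintro x ⟨hx0, hx1⟩
      have hφ : φce x = x := by simp [φce, show x ≤ 2 by linarith]
      norm_num [loss01, hφ, hce_of_le hx1]
  · rw [integral_Icc_eq_integral_Ioc,
      setIntegral_congr_fun measurableSet_Ioc (g := fun _ => (0:ℝ))]
    · simp
    · rintro x ⟨hx0, hx1⟩
      have hφ : φce x = x - 2 := by
        simp [φce, show ¬ x ≤ 2 by linarith, show x ≤ 4 by linarith]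
      norm_num [loss01, hφ, hce_of_gt (show (1:ℝ) < x - 2 by linarith)]
  · have h := tv_helper 0 ε hε0 hε1'
    rw [show (0:ℝ)+ε = ε by ring, show (0:ℝ)+1+ε = 1+ε by ring,
      show (0:ℝ)+1 = 1 by ring] at h
    exact h
  · have h := tv_helper 3 ε hε0 hε1'
    rw [show (3:ℝ)+ε = 3+ε by ring, show (3:ℝ)+1+ε = 4+ε by ring,
      show (3:ℝ)+1 = 4 by norm_num] at h
    exact h
  · have hsplit : Set.Icc ε (1+ε) = Set.Icc ε 1 ∪ Set.Ioc 1 (1+ε) :=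
      (Set.Icc_union_Ioc_eq_Icc hε1' (by linarith)).symm
    have hz : ∀ x ∈ Set.Icc ε 1, loss01 (hce (φce x)) 1 = 0 := by
      rintro x ⟨hx0, hx1⟩
      have hφ : φce x = x := by simp [φce, show x ≤ 2 by linarith]
      norm_num [loss01, hφ, hce_of_le hx1]
    have ho : ∀ x ∈ Set.Ioc 1 (1+ε), loss01 (hce (φce x)) 1 = 1 := by
      rintro x ⟨hx0, hx1⟩
      have hφ : φce x = x := by simp [φce, show x ≤ 2 by linarith]
      norm_num [loss01, hφ, hce_of_gt hx0]
    have int1 : IntegrableOn (fun x => loss01 (hce (φce x)) 1) (Set.Icc ε 1) := by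
      rw [integrableOn_congr_fun hz measurableSet_Icc]
      exact (integrableOn_const_iff (by finiteness)).mpr (Or.inr (by simp [Real.volume_Icc]))
    have int2 : IntegrableOn (fun x => loss01 (hce (φce x)) 1) (Set.Ioc 1 (1+ε)) := by
      rw [integrableOn_congr_fun ho measurableSet_Ioc]
      exact (integrableOn_const_iff (by finiteness)).mpr (Or.inr (by simp [Real.volume_Ioc]))
    rw [hsplit, setIntegral_union ((by rw [Set.disjoint_left]; rintro t ⟨_, h1⟩ ⟨h2, _⟩; linarith)) measurableSet_Ioc int1 int2,
      setIntegral_congr_fun measurableSet_Icc hz,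
      setIntegral_congr_fun measurableSet_Ioc ho]
    simp [Real.volume_Ioc, ENNReal.toReal_ofReal hε0.le, hε0.le]
  · have hsplit : Set.Icc (3+ε) (4+ε) = Set.Icc (3+ε) 4 ∪ Set.Ioc 4 (4+ε) :=
      (Set.Icc_union_Ioc_eq_Icc (by linarith) (by linarith)).symm
    have hz : ∀ x ∈ Set.Icc (3+ε) 4, loss01 (hce (φce x)) (-1) = 0 := by
      rintro x ⟨hx0, hx1⟩
      have hφ : φce x = x - 2 := by
        simp [φce, show ¬ x ≤ 2 by linarith, hx1]
      norm_num [loss01, hφ, hce_of_gt (show (1:ℝ) < x - 2 by linarith)]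
    have ho : ∀ x ∈ Set.Ioc 4 (4+ε), loss01 (hce (φce x)) (-1) = 1 := by
      rintro x ⟨hx0, hx1⟩
      have hφ : φce x = 5 - x := by
        simp [φce, show ¬ x ≤ 2 by linarith, show ¬ x ≤ 4 by linarith]
      norm_num [loss01, hφ, hce_of_le (show 5 - x ≤ 1 by linarith)]
    have int1 : IntegrableOn (fun x => loss01 (hce (φce x)) (-1)) (Set.Icc (3+ε) 4) := by
      rw [integrableOn_congr_fun hz measurableSet_Icc]
      exact (integrableOn_const_iff (by finiteness)).mpr (Or.inr (by simp [Real.volume_Icc]))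
    have int2 : IntegrableOn (fun x => loss01 (hce (φce x)) (-1)) (Set.Ioc 4 (4+ε)) := by
      rw [integrableOn_congr_fun ho measurableSet_Ioc]
      exact (integrableOn_const_iff (by finiteness)).mpr (Or.inr (by simp [Real.volume_Ioc]))
    rw [hsplit, setIntegral_union ((by rw [Set.disjoint_left]; rintro t ⟨_, h1⟩ ⟨h2, _⟩; linarith)) measurableSet_Ioc int1 int2,
      setIntegral_congr_fun measurableSet_Icc hz,
      setIntegral_congr_fun measurableSet_Ioc ho]
    simp [Real.volume_Ioc, ENNReal.toReal_ofReal hε0.le, hε0.le]
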